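/- Let a ≥ 1 be a real number, let n ≥ 4a be an integer, let f: {0,1}^n → ℝ be a nonnegative a-self-bounding function, and let ε ∈ (0,1]. Set ρ = 1 − ε/(2a), d = ⌈(2a/ε)·ln(3/ε)⌉, and define the multilinear polynomial p(x) = Σ_{S⊆[n], |S|<d} ρ^{|S|} · f̂(S) · χ_S(x). Then ‖f − p‖_1 ≤ ε·‖f‖_2. -/
import Mathlib


noncomputable section

/-- A function `f : {0,1}^n → ℝ` is `a`-self-bounding. -/
def SelfBounding (n : ℕ) (a : ℝ) (f : (Fin n → Bool) → ℝ) : Prop :=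
  ∀ x : Fin n → Bool,
    (∀ i : Fin n,
      f x - min (f (Function.update x i false)) (f (Function.update x i true)) ≤ 1) ∧
    ∑ i : Fin n,
      (f x - min (f (Function.update x i false)) (f (Function.update x i true))) ≤ a * f x

/-- Expectation with respect to the uniform distribution on `{0,1}^n`. -/
def expect (n : ℕ) (g : (Fin n → Bool) → ℝ) : ℝ :=
  (∑ x : Fin n → Bool, g x) / 2 ^ n

/-- The parity function `χ_S(x) = (-1)^{Σ_{i∈S} x_i}`. -/
def parity (n : ℕ) (S : Finset (Fin n)) (x : Fin n → Bool) : ℝ :=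
  (-1 : ℝ) ^ (S.filter (fun i => x i = true)).card

/-- Fourier coefficient `f̂(S) = E[f ⬝ χ_S]`. -/
def fourierHat (n : ℕ) (f : (Fin n → Bool) → ℝ) (S : Finset (Fin n)) : ℝ :=
  expect n (fun x => f x * parity n S x)

namespace SB

variable {n : ℕ}

lemma sum_pi_bool_prod (g : Fin n → Bool → ℝ) :
    ∑ x : Fin n → Bool, ∏ i, g i (x i) = ∏ i, (g i false + g i true) := by
  rw [← Fintype.piFinset_univ, Finset.sum_prod_piFinset]
  refine Finset.prod_congr rfl fun i _ => ?_
  rw [Fintype.sum_bool]; ring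

lemma parity_eq_prod (S : Finset (Fin n)) (x : Fin n → Bool) :
    parity n S x = ∏ i ∈ S, (if x i = true then (-1 : ℝ) else 1) := by
  rw [parity, Finset.prod_ite, Finset.prod_const, Finset.prod_const, one_pow, mul_one]

lemma parity_eq_prod_univ (S : Finset (Fin n)) (x : Fin n → Bool) :
    parity n S x = ∏ i, (if i ∈ S then (if x i = true then (-1 : ℝ) else 1) else 1) := by
  rw [parity_eq_prod, Finset.prod_ite_mem, Finset.univ_inter]

lemma parity_sq (S : Finset (Fin n)) (x : Fin n → Bool) :
    parity n S x * parity n S x = 1 := by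
  rw [parity]
  rcases Nat.even_or_odd (S.filter (fun i => x i = true)).card with h | h
  · rw [h.neg_one_pow]; norm_num
  · rw [h.neg_one_pow]; norm_num

lemma sum_parity_mul (S T : Finset (Fin n)) :
    ∑ x : Fin n → Bool, parity n S x * parity n T x
      = if S = T then (2 : ℝ) ^ n else 0 := by
  have h1 : ∀ x : Fin n → Bool, parity n S x * parity n T x
      = ∏ i, ((if i ∈ S then (if x i = true then (-1 : ℝ) else 1) else 1) *
              (if i ∈ T then (if x i = true then (-1 : ℝ) else 1) else 1)) := by
    intro x
    rw [parity_eq_prod_univ, parity_eq_prod_univ, ← Finset.prod_mul_distrib]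
  rw [Finset.sum_congr rfl fun x _ => h1 x,
    sum_pi_bool_prod (fun i (b : Bool) =>
      (if i ∈ S then (if b = true then (-1 : ℝ) else 1) else 1) *
      (if i ∈ T then (if b = true then (-1 : ℝ) else 1) else 1))]
  have h2 : ∀ i : Fin n,
      ((if i ∈ S then (if (false : Bool) = true then (-1 : ℝ) else 1) else 1) *
        (if i ∈ T then (if (false : Bool) = true then (-1 : ℝ) else 1) else 1)) +
      ((if i ∈ S then (if (true : Bool) = true then (-1 : ℝ) else 1) else 1) *
        (if i ∈ T then (if (true : Bool) = true then (-1 : ℝ) else 1) else 1))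
      = if (i ∈ S ↔ i ∈ T) then 2 else 0 := by
    intro i
    by_cases hS : i ∈ S <;> by_cases hT : i ∈ T <;> simp [hS, hT] <;> norm_num
  rw [Finset.prod_congr rfl fun i _ => h2 i]
  by_cases hST : S = T
  · subst hST
    simp [Finset.prod_const]
  · have : ∃ i : Fin n, ¬ (i ∈ S ↔ i ∈ T) := by
      by_contra hc
      push_neg at hc
      exact hST (Finset.ext fun i => by
        have := hc i
        tauto)
    obtain ⟨i, hi⟩ := this
    rw [if_neg hST, Finset.prod_eq_zero (Finset.mem_univ i)]
    rw [if_neg hi]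

lemma sum_parity_pair (x y : Fin n → Bool) :
    ∑ S : Finset (Fin n), parity n S x * parity n S y
      = if x = y then (2 : ℝ) ^ n else 0 := by
  have h1 : ∀ S : Finset (Fin n), parity n S x * parity n S y
      = ∏ i ∈ S, ((if x i = true then (-1 : ℝ) else 1) * (if y i = true then (-1 : ℝ) else 1)) := by
    intro S
    rw [parity_eq_prod, parity_eq_prod, ← Finset.prod_mul_distrib]
  rw [Finset.sum_congr rfl fun S _ => h1 S]
  have h2 := Finset.prod_add
    (fun i : Fin n => (if x i = true then (-1 : ℝ) else 1) * (if y i = true then (-1 : ℝ) else 1))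
    (fun _ : Fin n => (1 : ℝ)) Finset.univ
  simp only [Finset.prod_const_one, mul_one, Finset.powerset_univ] at h2
  rw [← h2]
  have h3 : ∀ i : Fin n,
      ((if x i = true then (-1 : ℝ) else 1) * (if y i = true then (-1 : ℝ) else 1) + 1)
        = if x i = y i then 2 else 0 := by
    intro i
    cases hx : x i <;> cases hy : y i <;> simp [hx, hy] <;> norm_num
  rw [Finset.prod_congr rfl fun i _ => h3 i]
  by_cases hxy : x = y
  · subst hxy; simp
  · have : ∃ i, x i ≠ y i := by
      by_contra hc
      push_neg at hc
      exact hxy (funext hc)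
    obtain ⟨i, hi⟩ := this
    rw [if_neg hxy, Finset.prod_eq_zero (Finset.mem_univ i), ]
    rw [if_neg hi]

lemma fourier_inversion (f : (Fin n → Bool) → ℝ) (x : Fin n → Bool) :
    f x = ∑ S : Finset (Fin n), fourierHat n f S * parity n S x := by
  symm
  calc ∑ S : Finset (Fin n), fourierHat n f S * parity n S x
      = ∑ S : Finset (Fin n), ∑ y : Fin n → Bool,
          f y * (parity n S y * parity n S x) / 2 ^ n := by
        refine Finset.sum_congr rfl fun S _ => ?_
        rw [fourierHat, expect, div_mul_eq_mul_div, Finset.sum_mul, Finset.sum_div]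
        exact Finset.sum_congr rfl fun y _ => by ring
    _ = ∑ y : Fin n → Bool, f y * (if y = x then (2 : ℝ) ^ n else 0) / 2 ^ n := by
        rw [Finset.sum_comm]
        refine Finset.sum_congr rfl fun y _ => ?_
        rw [← sum_parity_pair y x, Finset.mul_sum, Finset.sum_div]
    _ = ∑ y : Fin n → Bool, if y = x then f y else 0 := by
        refine Finset.sum_congr rfl fun y _ => ?_
        split_ifs with h
        · field_simp
        · simp
    _ = f x := by rw [Finset.sum_ite_eq' Finset.univ x f]; simp

lemma expect_sq_of_sum (A : Finset (Finset (Fin n))) (c : Finset (Fin n) → ℝ) :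
    expect n (fun x => (∑ S ∈ A, c S * parity n S x) ^ 2) = ∑ S ∈ A, c S ^ 2 := by
  have h2 : (2 : ℝ) ^ n ≠ 0 := by positivity
  rw [expect]
  have key : ∑ x : Fin n → Bool, (∑ S ∈ A, c S * parity n S x) ^ 2
      = ∑ S ∈ A, c S ^ 2 * 2 ^ n := by
    calc ∑ x : Fin n → Bool, (∑ S ∈ A, c S * parity n S x) ^ 2
        = ∑ x : Fin n → Bool, ∑ S ∈ A, ∑ T ∈ A,
            (c S * c T) * (parity n S x * parity n T x) := by
          refine Finset.sum_congr rfl fun x _ => ?_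
          rw [sq, Finset.sum_mul_sum]
          exact Finset.sum_congr rfl fun S _ =>
            Finset.sum_congr rfl fun T _ => by ring
      _ = ∑ S ∈ A, ∑ T ∈ A, (c S * c T) *
            ∑ x : Fin n → Bool, parity n S x * parity n T x := by
          rw [Finset.sum_comm]
          refine Finset.sum_congr rfl fun S _ => ?_
          rw [Finset.sum_comm]
          exact Finset.sum_congr rfl fun T _ => (Finset.mul_sum _ _ _).symm
      _ = ∑ S ∈ A, c S ^ 2 * 2 ^ n := by
          refine Finset.sum_congr rfl fun S hS => ?_
          simp only [sum_parity_mul, mul_ite, mul_zero]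
          rw [Finset.sum_ite_eq A S (fun T => c S * c T * 2 ^ n), if_pos hS]
          ring
  rw [key, ← Finset.sum_mul, mul_div_assoc, div_self h2, mul_one]

lemma parseval (f : (Fin n → Bool) → ℝ) :
    expect n (fun x => f x ^ 2) = ∑ S : Finset (Fin n), fourierHat n f S ^ 2 := by
  rw [← expect_sq_of_sum Finset.univ (fourierHat n f)]
  unfold expect
  congr 1
  refine Finset.sum_congr rfl fun x _ => ?_
  simp only
  rw [← fourier_inversion]

lemma expect_abs_le_sqrt (g : (Fin n → Bool) → ℝ) :
    expect n (fun x => |g x|) ≤ Real.sqrt (expect n (fun x => g x ^ 2)) := by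
  have h2 : (0 : ℝ) < 2 ^ n := by positivity
  have hcs := Finset.sum_mul_sq_le_sq_mul_sq Finset.univ
    (fun _ : Fin n → Bool => (1 : ℝ)) (fun x => |g x|)
  simp only [one_mul, one_pow, sq_abs, Finset.sum_const, Finset.card_univ,
    nsmul_eq_mul, mul_one] at hcs
  have hcard : (Fintype.card (Fin n → Bool) : ℝ) = 2 ^ n := by
    simp [Fintype.card_fun]
  rw [hcard] at hcs
  have hmain : ((∑ x : Fin n → Bool, |g x|) / 2 ^ n) ^ 2
      ≤ (∑ x : Fin n → Bool, g x ^ 2) / 2 ^ n := by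
    rw [div_pow, div_le_div_iff₀ (by positivity) h2]
    calc (∑ x : Fin n → Bool, |g x|) ^ 2 * 2 ^ n
        ≤ (2 ^ n * ∑ x : Fin n → Bool, g x ^ 2) * 2 ^ n :=
          mul_le_mul_of_nonneg_right hcs h2.le
      _ = (∑ x : Fin n → Bool, g x ^ 2) * ((2:ℝ) ^ n) ^ 2 := by ring
  rw [expect, expect]
  calc (∑ x : Fin n → Bool, |g x|) / 2 ^ n
      = Real.sqrt (((∑ x : Fin n → Bool, |g x|) / 2 ^ n) ^ 2) :=
        (Real.sqrt_sq (by positivity)).symm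
    _ ≤ Real.sqrt ((∑ x : Fin n → Bool, g x ^ 2) / 2 ^ n) := Real.sqrt_le_sqrt hmain

def mu (ρ : ℝ) : Bool → ℝ := fun b => if b then (1 - ρ) / 2 else (1 + ρ) / 2

def w (n : ℕ) (ρ : ℝ) (e : Fin n → Bool) : ℝ := ∏ i, mu ρ (e i)

def bxor {n : ℕ} (x e : Fin n → Bool) : Fin n → Bool := fun i => xor (x i) (e i)

def noise (n : ℕ) (ρ : ℝ) (f : (Fin n → Bool) → ℝ) : (Fin n → Bool) → ℝ :=
  fun x => ∑ e : Fin n → Bool, w n ρ e * f (bxor x e)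

lemma w_nonneg {ρ : ℝ} (hρ0 : 0 ≤ ρ) (hρ1 : ρ ≤ 1) (e : Fin n → Bool) :
    0 ≤ w n ρ e := by
  refine Finset.prod_nonneg fun i _ => ?_
  cases e i <;> simp [mu] <;> linarith

lemma bxor_bxor (x e : Fin n → Bool) : bxor (bxor x e) e = x := by
  funext i
  simp [bxor]

lemma parity_bxor (S : Finset (Fin n)) (x e : Fin n → Bool) :
    parity n S (bxor x e) = parity n S x * parity n S e := by
  rw [parity_eq_prod, parity_eq_prod, parity_eq_prod, ← Finset.prod_mul_distrib]
  refine Finset.prod_congr rfl fun i _ => ?_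
  cases hx : x i <;> cases he : e i <;> simp [bxor, hx, he]

lemma sum_w_parity (ρ : ℝ) (S : Finset (Fin n)) :
    ∑ e : Fin n → Bool, w n ρ e * parity n S e = ρ ^ S.card := by
  have h1 : ∀ e : Fin n → Bool, w n ρ e * parity n S e
      = ∏ i, (mu ρ (e i) * (if i ∈ S then (if e i = true then (-1 : ℝ) else 1) else 1)) := by
    intro e
    rw [w, parity_eq_prod_univ, ← Finset.prod_mul_distrib]
  rw [Finset.sum_congr rfl fun e _ => h1 e,
    sum_pi_bool_prod (fun i (b : Bool) =>
      mu ρ b * (if i ∈ S then (if b = true then (-1 : ℝ) else 1) else 1))]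
  have h2 : ∀ i : Fin n,
      mu ρ false * (if i ∈ S then (if (false : Bool) = true then (-1 : ℝ) else 1) else 1)
        + mu ρ true * (if i ∈ S then (if (true : Bool) = true then (-1 : ℝ) else 1) else 1)
      = if i ∈ S then ρ else 1 := by
    intro i
    by_cases hi : i ∈ S <;> simp [mu, hi] <;> ring
  rw [Finset.prod_congr rfl fun i _ => h2 i, Finset.prod_ite_mem,
    Finset.univ_inter, Finset.prod_const]

lemma sum_w (ρ : ℝ) : ∑ e : Fin n → Bool, w n ρ e = 1 := by
  have h := sum_w_parity (n := n) ρ ∅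
  simpa [parity] using h

lemma sum_w_if (ρ : ℝ) (k : Fin n) :
    ∑ e : Fin n → Bool, (if e k = true then w n ρ e else 0) = (1 - ρ) / 2 := by
  have h1 : ∀ e : Fin n → Bool, (if e k = true then w n ρ e else 0)
      = ∏ i, (mu ρ (e i) * (if i = k then (if e i = true then (1 : ℝ) else 0) else 1)) := by
    intro e
    by_cases hek : e k = true
    · rw [if_pos hek, w, Finset.prod_mul_distrib]
      have hone : ∏ i, (if i = k then (if e i = true then (1 : ℝ) else 0) else 1) = 1 := by
        rw [Finset.prod_ite_eq' Finset.univ k (fun i => if e i = true then (1 : ℝ) else 0)]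
        simp [hek]
      rw [hone, mul_one]
    · rw [if_neg hek]
      symm
      apply Finset.prod_eq_zero (Finset.mem_univ k)
      simp [hek]
  rw [Finset.sum_congr rfl fun e _ => h1 e,
    sum_pi_bool_prod (fun i (b : Bool) =>
      mu ρ b * (if i = k then (if b = true then (1 : ℝ) else 0) else 1))]
  have h2 : ∀ i : Fin n,
      mu ρ false * (if i = k then (if (false : Bool) = true then (1 : ℝ) else 0) else 1)
        + mu ρ true * (if i = k then (if (true : Bool) = true then (1 : ℝ) else 0) else 1)
      = if i = k then (1 - ρ) / 2 else 1 := by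
    intro i
    by_cases hik : i = k <;> simp [mu, hik] <;> ring
  rw [Finset.prod_congr rfl fun i _ => h2 i,
    Finset.prod_ite_eq' Finset.univ k (fun _ => (1 - ρ) / 2), if_pos (Finset.mem_univ k)]

lemma noise_eq (ρ : ℝ) (f : (Fin n → Bool) → ℝ) (x : Fin n → Bool) :
    noise n ρ f x
      = ∑ S : Finset (Fin n), ρ ^ S.card * fourierHat n f S * parity n S x := by
  rw [noise]
  calc ∑ e : Fin n → Bool, w n ρ e * f (bxor x e)
      = ∑ e : Fin n → Bool, ∑ S : Finset (Fin n),
          (fourierHat n f S * parity n S x) * (w n ρ e * parity n S e) := by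
        refine Finset.sum_congr rfl fun e _ => ?_
        rw [fourier_inversion f (bxor x e), Finset.mul_sum]
        refine Finset.sum_congr rfl fun S _ => ?_
        rw [parity_bxor]
        ring
    _ = ∑ S : Finset (Fin n), ρ ^ S.card * fourierHat n f S * parity n S x := by
        rw [Finset.sum_comm]
        refine Finset.sum_congr rfl fun S _ => ?_
        rw [← Finset.mul_sum, sum_w_parity]
        ring

def path {n : ℕ} (k : ℕ) (x e : Fin n → Bool) : Fin n → Bool :=
  fun i => if (i : ℕ) < k then xor (x i) (e i) else x i

def gdec {n : ℕ} (f : (Fin n → Bool) → ℝ) (k : Fin n) (y : Fin n → Bool) : ℝ :=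
  f y - min (f (Function.update y k false)) (f (Function.update y k true))

lemma path_zero (x e : Fin n → Bool) : path 0 x e = x := by
  funext i; simp [path]

lemma path_top (x e : Fin n → Bool) : path n x e = bxor x e := by
  funext i; simp [path, i.isLt, bxor]

lemma path_invol (k : ℕ) (x e : Fin n → Bool) : path k (path k x e) e = x := by
  funext i
  by_cases h : (i : ℕ) < k
  · simp only [path, if_pos h]
    cases x i <;> cases e i <;> rfl
  · simp only [path, if_neg h]

lemma gdec_nonneg (f : (Fin n → Bool) → ℝ) (k : Fin n) (y : Fin n → Bool) :
    min (f (Function.update y k false)) (f (Function.update y k true)) ≤ f y := by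
  cases hyk : y k
  · refine le_trans (min_le_left _ _) (le_of_eq ?_)
    rw [← hyk, Function.update_eq_self]
  · refine le_trans (min_le_right _ _) (le_of_eq ?_)
    rw [← hyk, Function.update_eq_self]

lemma path_succ_of_false (k : Fin n) (x e : Fin n → Bool) (hek : e k = false) :
    path ((k : ℕ) + 1) x e = path (k : ℕ) x e := by
  funext i
  simp only [path]
  by_cases h : (i : ℕ) < (k : ℕ)
  · rw [if_pos h, if_pos (Nat.lt_succ_of_lt h)]
  · by_cases h2 : (i : ℕ) < (k : ℕ) + 1
    · have hik : i = k := Fin.ext (by omega)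
      rw [if_pos h2, if_neg h, hik, hek]
      cases x k <;> rfl
    · rw [if_neg h, if_neg h2]

lemma path_succ (k : Fin n) (x e : Fin n → Bool) :
    path ((k : ℕ) + 1) x e = Function.update (path (k : ℕ) x e) k (xor (x k) (e k)) := by
  funext i
  by_cases hik : i = k
  · subst hik
    rw [Function.update_self]
    simp [path, Nat.lt_succ_self, Nat.lt_irrefl]
  · rw [Function.update_of_ne hik]
    have hv : (i : ℕ) ≠ (k : ℕ) := fun h => hik (Fin.ext h)
    simp only [path]
    by_cases h : (i : ℕ) < (k : ℕ)
    · rw [if_pos h, if_pos (Nat.lt_succ_of_lt h)]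
    · rw [if_neg h, if_neg (by omega)]

lemma step_bound (f : (Fin n → Bool) → ℝ) (k : Fin n) (x e : Fin n → Bool) :
    f (path (k : ℕ) x e) - f (path ((k : ℕ) + 1) x e)
      ≤ if e k = true then gdec f k (path (k : ℕ) x e) else 0 := by
  cases hek : e k
  · rw [if_neg (by simp [hek]), path_succ_of_false k x e hek, sub_self]
  · rw [if_pos rfl, gdec, path_succ]
    have hmin : min (f (Function.update (path (k : ℕ) x e) k false))
        (f (Function.update (path (k : ℕ) x e) k true))
        ≤ f (Function.update (path (k : ℕ) x e) k (xor (x k) (e k))) := by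
      cases xor (x k) (e k)
      · exact min_le_left _ _
      · exact min_le_right _ _
    linarith

lemma telescope_bound (f : (Fin n → Bool) → ℝ) (x e : Fin n → Bool) :
    f x - f (bxor x e)
      ≤ ∑ k : Fin n, (if e k = true then gdec f k (path (k : ℕ) x e) else 0) := by
  have htel := Finset.sum_range_sub' (fun k => f (path k x e)) n
  rw [path_zero, path_top] at htel
  rw [← htel]
  have hr : ∑ k ∈ Finset.range n, (fun k : ℕ =>
      if h : k < n then (if e ⟨k, h⟩ = true then gdec f ⟨k, h⟩ (path k x e) else 0) else 0) k
      = ∑ k : Fin n, (if e k = true then gdec f k (path (k : ℕ) x e) else 0) := by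
    rw [Finset.sum_range]
    exact Finset.sum_congr rfl fun i _ => by rw [dif_pos i.isLt]
  rw [← hr]
  refine Finset.sum_le_sum fun k hk => ?_
  have hkn : k < n := Finset.mem_range.mp hk
  simp only [dif_pos hkn]
  exact step_bound f ⟨k, hkn⟩ x e

lemma max_bound (f : (Fin n → Bool) → ℝ) (hf0 : ∀ x, 0 ≤ f x) (x e : Fin n → Bool) :
    max (f x - f (bxor x e)) 0
      ≤ ∑ k : Fin n, (if e k = true then gdec f k (path (k : ℕ) x e) else 0) := by
  refine max_le (telescope_bound f x e) (Finset.sum_nonneg fun k _ => ?_)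
  split_ifs
  · have := gdec_nonneg f k (path (k : ℕ) x e)
    rw [gdec]; linarith
  · exact le_refl 0

lemma l1_noise (a ρ : ℝ) (hρ0 : 0 ≤ ρ) (hρ1 : ρ ≤ 1)
    (f : (Fin n → Bool) → ℝ) (hf0 : ∀ x, 0 ≤ f x) (hf : SelfBounding n a f) :
    expect n (fun x => |f x - noise n ρ f x|)
      ≤ (1 - ρ) * a * expect n (fun x => f x) := by
  have h2 : (0 : ℝ) < 2 ^ n := by positivity
  -- pointwise bound by the double sum
  have hpt : ∀ x : Fin n → Bool, |f x - noise n ρ f x|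
      ≤ ∑ e : Fin n → Bool, w n ρ e * |f x - f (bxor x e)| := by
    intro x
    have hdiff : f x - noise n ρ f x
        = ∑ e : Fin n → Bool, w n ρ e * (f x - f (bxor x e)) := by
      rw [noise]
      have : ∑ e : Fin n → Bool, w n ρ e * (f x - f (bxor x e))
          = (∑ e : Fin n → Bool, w n ρ e) * f x
            - ∑ e : Fin n → Bool, w n ρ e * f (bxor x e) := by
        rw [Finset.sum_mul, ← Finset.sum_sub_distrib]
        exact Finset.sum_congr rfl fun e _ => by ring
      rw [this, sum_w, one_mul]
    rw [hdiff]
    refine le_trans (Finset.abs_sum_le_sum_abs _ _) (Finset.sum_le_sum fun e _ => ?_)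
    rw [abs_mul, abs_of_nonneg (w_nonneg hρ0 hρ1 e)]
  -- symmetrize
  have habs : ∀ t : ℝ, |t| = max t 0 + max (-t) 0 := by
    intro t
    rcases le_total 0 t with h | h
    · rw [abs_of_nonneg h, max_eq_left h, max_eq_right (by linarith), add_zero]
    · rw [abs_of_nonpos h, max_eq_right h, max_eq_left (by linarith), zero_add]
  have hsym : ∑ x : Fin n → Bool, ∑ e : Fin n → Bool, w n ρ e * |f x - f (bxor x e)|
      = 2 * ∑ e : Fin n → Bool, ∑ x : Fin n → Bool,
          w n ρ e * max (f x - f (bxor x e)) 0 := by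
    rw [Finset.sum_comm]
    have : ∀ e : Fin n → Bool, ∑ x : Fin n → Bool, w n ρ e * |f x - f (bxor x e)|
        = 2 * ∑ x : Fin n → Bool, w n ρ e * max (f x - f (bxor x e)) 0 := by
      intro e
      have hsplit : ∑ x : Fin n → Bool, w n ρ e * |f x - f (bxor x e)|
          = (∑ x : Fin n → Bool, w n ρ e * max (f x - f (bxor x e)) 0)
            + ∑ x : Fin n → Bool, w n ρ e * max (f (bxor x e) - f x) 0 := by
        rw [← Finset.sum_add_distrib]
        refine Finset.sum_congr rfl fun x _ => ?_
        rw [habs (f x - f (bxor x e)), neg_sub]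
        ring
      have hswap : ∑ x : Fin n → Bool, w n ρ e * max (f (bxor x e) - f x) 0
          = ∑ x : Fin n → Bool, w n ρ e * max (f x - f (bxor x e)) 0 := by
        refine Fintype.sum_bijective (fun x => bxor x e)
          (Function.Involutive.bijective (fun x => bxor_bxor x e)) _ _ fun x => ?_
        rw [bxor_bxor]
      rw [hsplit, hswap]
      ring
    rw [Finset.sum_congr rfl fun e _ => this e, ← Finset.mul_sum]
  -- bound the symmetrized sum
  have hbig : ∑ e : Fin n → Bool, ∑ x : Fin n → Bool,
        w n ρ e * max (f x - f (bxor x e)) 0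
      ≤ (1 - ρ) / 2 * (a * ∑ x : Fin n → Bool, f x) := by
    have hstep1 : ∑ e : Fin n → Bool, ∑ x : Fin n → Bool,
          w n ρ e * max (f x - f (bxor x e)) 0
        ≤ ∑ e : Fin n → Bool, ∑ x : Fin n → Bool, ∑ k : Fin n,
            w n ρ e * (if e k = true then gdec f k (path (k : ℕ) x e) else 0) := by
      refine Finset.sum_le_sum fun e _ => Finset.sum_le_sum fun x _ => ?_
      rw [← Finset.mul_sum]
      exact mul_le_mul_of_nonneg_left (max_bound f hf0 x e) (w_nonneg hρ0 hρ1 e)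
    refine le_trans hstep1 ?_
    have hswap2 : ∑ e : Fin n → Bool, ∑ x : Fin n → Bool, ∑ k : Fin n,
          w n ρ e * (if e k = true then gdec f k (path (k : ℕ) x e) else 0)
        = ∑ k : Fin n, ∑ e : Fin n → Bool, ∑ x : Fin n → Bool,
            w n ρ e * (if e k = true then gdec f k (path (k : ℕ) x e) else 0) := by
      calc ∑ e : Fin n → Bool, ∑ x : Fin n → Bool, ∑ k : Fin n,
            w n ρ e * (if e k = true then gdec f k (path (k : ℕ) x e) else 0)
          = ∑ e : Fin n → Bool, ∑ k : Fin n, ∑ x : Fin n → Bool,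
              w n ρ e * (if e k = true then gdec f k (path (k : ℕ) x e) else 0) :=
            Finset.sum_congr rfl fun e _ => Finset.sum_comm
        _ = ∑ k : Fin n, ∑ e : Fin n → Bool, ∑ x : Fin n → Bool,
              w n ρ e * (if e k = true then gdec f k (path (k : ℕ) x e) else 0) :=
            Finset.sum_comm
    rw [hswap2]
    have hk : ∀ k : Fin n, ∑ e : Fin n → Bool, ∑ x : Fin n → Bool,
          w n ρ e * (if e k = true then gdec f k (path (k : ℕ) x e) else 0)
        = (1 - ρ) / 2 * ∑ x : Fin n → Bool, gdec f k x := by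
      intro k
      have he : ∀ e : Fin n → Bool, ∑ x : Fin n → Bool,
            w n ρ e * (if e k = true then gdec f k (path (k : ℕ) x e) else 0)
          = (if e k = true then w n ρ e else 0) * ∑ x : Fin n → Bool, gdec f k x := by
        intro e
        by_cases hek : e k = true
        · simp only [if_pos hek]
          rw [← Finset.mul_sum]
          congr 1
          exact Fintype.sum_bijective (fun x => path (k : ℕ) x e)
            (Function.Involutive.bijective (fun x => path_invol (k : ℕ) x e))
            _ _ (fun x => rfl)
        · simp [hek]
      rw [Finset.sum_congr rfl fun e _ => he e, ← Finset.sum_mul, sum_w_if]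
    rw [Finset.sum_congr rfl fun k _ => hk k, ← Finset.mul_sum]
    refine mul_le_mul_of_nonneg_left ?_ (by linarith)
    rw [Finset.sum_comm]
    calc ∑ x : Fin n → Bool, ∑ k : Fin n, gdec f k x
        ≤ ∑ x : Fin n → Bool, a * f x :=
          Finset.sum_le_sum fun x _ => by simpa [gdec] using (hf x).2
      _ = a * ∑ x : Fin n → Bool, f x := by rw [Finset.mul_sum]
  -- assemble
  have chain : ∑ x : Fin n → Bool, |f x - noise n ρ f x|
      ≤ (1 - ρ) * a * ∑ x : Fin n → Bool, f x := by
    calc ∑ x : Fin n → Bool, |f x - noise n ρ f x|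
        ≤ ∑ x : Fin n → Bool, ∑ e : Fin n → Bool, w n ρ e * |f x - f (bxor x e)| :=
          Finset.sum_le_sum fun x _ => hpt x
      _ = 2 * ∑ e : Fin n → Bool, ∑ x : Fin n → Bool,
            w n ρ e * max (f x - f (bxor x e)) 0 := hsym
      _ ≤ 2 * ((1 - ρ) / 2 * (a * ∑ x : Fin n → Bool, f x)) := by linarith [hbig]
      _ = (1 - ρ) * a * ∑ x : Fin n → Bool, f x := by ring
  have hrhs : (1 - ρ) * a * expect n (fun x => f x)
      = ((1 - ρ) * a * ∑ x : Fin n → Bool, f x) / 2 ^ n := by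
    rw [expect, mul_div_assoc]
  rw [expect, hrhs]
  exact div_le_div_of_nonneg_right chain h2.le

lemma expect_mono {u v : (Fin n → Bool) → ℝ} (h : ∀ x, u x ≤ v x) :
    expect n u ≤ expect n v :=
  div_le_div_of_nonneg_right (Finset.sum_le_sum fun x _ => h x) (by positivity)

lemma expect_add (u v : (Fin n → Bool) → ℝ) :
    expect n (fun x => u x + v x) = expect n u + expect n v := by
  unfold expect
  rw [← add_div, Finset.sum_add_distrib]

lemma expect_congr {u v : (Fin n → Bool) → ℝ} (h : ∀ x, u x = v x) :
    expect n u = expect n v := by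
  unfold expect
  congr 1
  exact Finset.sum_congr rfl fun x _ => h x

lemma tail_bound (ρ : ℝ) (hρ0 : 0 ≤ ρ) (hρ1 : ρ ≤ 1) (d : ℕ) (f : (Fin n → Bool) → ℝ) :
    expect n (fun x => |noise n ρ f x -
        ∑ S ∈ Finset.univ.filter (fun S : Finset (Fin n) => S.card < d),
          ρ ^ S.card * fourierHat n f S * parity n S x|)
      ≤ ρ ^ d * Real.sqrt (expect n (fun x => f x ^ 2)) := by
  set A := Finset.univ.filter (fun S : Finset (Fin n) => ¬ S.card < d) with hA
  have hdiff : ∀ x : Fin n → Bool,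
      noise n ρ f x - (∑ S ∈ Finset.univ.filter (fun S : Finset (Fin n) => S.card < d),
          ρ ^ S.card * fourierHat n f S * parity n S x)
        = ∑ S ∈ A, (ρ ^ S.card * fourierHat n f S) * parity n S x := by
    intro x
    rw [noise_eq, ← Finset.sum_filter_add_sum_filter_not Finset.univ
      (fun S : Finset (Fin n) => S.card < d)
      (fun S => ρ ^ S.card * fourierHat n f S * parity n S x), add_sub_cancel_left]
  have hsum : ∑ S ∈ A, (ρ ^ S.card * fourierHat n f S) ^ 2
      ≤ (ρ ^ d) ^ 2 * expect n (fun x => f x ^ 2) := by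
    calc ∑ S ∈ A, (ρ ^ S.card * fourierHat n f S) ^ 2
        ≤ ∑ S ∈ A, (ρ ^ d) ^ 2 * fourierHat n f S ^ 2 := by
          refine Finset.sum_le_sum fun S hS => ?_
          have hdS : d ≤ S.card := by
            have := (Finset.mem_filter.mp (hA ▸ hS)).2
            exact not_lt.mp this
          rw [mul_pow]
          exact mul_le_mul_of_nonneg_right
            (pow_le_pow_left₀ (by positivity)
              (pow_le_pow_of_le_one hρ0 hρ1 hdS) 2) (sq_nonneg _)
      _ = (ρ ^ d) ^ 2 * ∑ S ∈ A, fourierHat n f S ^ 2 := by rw [Finset.mul_sum]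
      _ ≤ (ρ ^ d) ^ 2 * ∑ S : Finset (Fin n), fourierHat n f S ^ 2 := by
          refine mul_le_mul_of_nonneg_left ?_ (by positivity)
          exact Finset.sum_le_sum_of_subset_of_nonneg (Finset.filter_subset _ _)
            (fun S _ _ => sq_nonneg _)
      _ = (ρ ^ d) ^ 2 * expect n (fun x => f x ^ 2) := by rw [parseval]
  calc expect n (fun x => |noise n ρ f x -
          ∑ S ∈ Finset.univ.filter (fun S : Finset (Fin n) => S.card < d),
            ρ ^ S.card * fourierHat n f S * parity n S x|)
      ≤ Real.sqrt (expect n (fun x => (noise n ρ f x -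
          ∑ S ∈ Finset.univ.filter (fun S : Finset (Fin n) => S.card < d),
            ρ ^ S.card * fourierHat n f S * parity n S x) ^ 2)) :=
        expect_abs_le_sqrt _
    _ = Real.sqrt (∑ S ∈ A, (ρ ^ S.card * fourierHat n f S) ^ 2) := by
        rw [expect_congr (fun x => by rw [hdiff x]), expect_sq_of_sum]
    _ ≤ Real.sqrt ((ρ ^ d) ^ 2 * expect n (fun x => f x ^ 2)) := Real.sqrt_le_sqrt hsum
    _ = ρ ^ d * Real.sqrt (expect n (fun x => f x ^ 2)) := by
        rw [Real.sqrt_mul (by positivity), Real.sqrt_sq (by positivity)]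

end SB
theorem selfbounding_lowdegree_approx (n : ℕ) (a : ℝ) (ha : 1 ≤ a) (hn : 4 * a ≤ (n : ℝ))
    (f : (Fin n → Bool) → ℝ) (hf0 : ∀ x, 0 ≤ f x) (hf : SelfBounding n a f)
    (ε : ℝ) (hε : ε ∈ Set.Ioc (0 : ℝ) 1)
    (ρ : ℝ) (hρ : ρ = 1 - ε / (2 * a))
    (d : ℕ) (hd : d = ⌈(2 * a / ε) * Real.log (3 / ε)⌉₊)
    (p : (Fin n → Bool) → ℝ)
    (hp : p = fun x => ∑ S ∈ Finset.univ.filter (fun S : Finset (Fin n) => S.card < d),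
      ρ ^ S.card * fourierHat n f S * parity n S x) :
    expect n (fun x => |f x - p x|) ≤ ε * Real.sqrt (expect n (fun x => (f x) ^ 2)) := by
  obtain ⟨hε0, hε1⟩ := hε
  have ha0 : (0 : ℝ) < a := lt_of_lt_of_le one_pos ha
  have ht0 : (0 : ℝ) < ε / (2 * a) := by positivity
  have ht2 : ε / (2 * a) ≤ 1 / 2 := by
    rw [div_le_div_iff₀ (by positivity) two_pos]
    nlinarith
  have hρ0 : 0 ≤ ρ := by rw [hρ]; linarith
  have hρ1 : ρ ≤ 1 := by rw [hρ]; linarith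
  -- numeric bound ρ^d ≤ ε/3
  have hL0 : 0 ≤ Real.log (3 / ε) := Real.log_nonneg (by
    rw [le_div_iff₀ hε0]; linarith)
  have hdge : (2 * a / ε) * Real.log (3 / ε) ≤ (d : ℝ) := by
    rw [hd]; exact Nat.le_ceil _
  have hda : Real.log (3 / ε) ≤ (d : ℝ) * (ε / (2 * a)) := by
    have h1 := mul_le_mul_of_nonneg_right hdge ht0.le
    have h2 : (2 * a / ε) * Real.log (3 / ε) * (ε / (2 * a)) = Real.log (3 / ε) := by
      field_simp
    linarith
  have hρd : ρ ^ d ≤ ε / 3 := by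
    have s1 : ρ ≤ Real.exp (-(ε / (2 * a))) := by
      have := Real.add_one_le_exp (-(ε / (2 * a)))
      rw [hρ]; linarith
    have s2 : ρ ^ d ≤ Real.exp (-(ε / (2 * a))) ^ d := pow_le_pow_left₀ hρ0 s1 d
    have s3 : Real.exp (-(ε / (2 * a))) ^ d = Real.exp ((d : ℝ) * -(ε / (2 * a))) :=
      (Real.exp_nat_mul _ d).symm
    have s4 : Real.exp ((d : ℝ) * -(ε / (2 * a))) ≤ Real.exp (-(Real.log (3 / ε))) := by
      apply Real.exp_le_exp.mpr
      have : (d : ℝ) * -(ε / (2 * a)) = -((d : ℝ) * (ε / (2 * a))) := by ring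
      rw [this]
      linarith
    have s5 : Real.exp (-(Real.log (3 / ε))) = ε / 3 := by
      rw [Real.exp_neg, Real.exp_log (by positivity), inv_div]
    linarith [s2, s3 ▸ s2, s4, s5 ▸ s4]
  -- triangle inequality through the noise operator
  have hsq : (0 : ℝ) ≤ Real.sqrt (expect n (fun x => f x ^ 2)) := Real.sqrt_nonneg _
  have htri : expect n (fun x => |f x - p x|)
      ≤ expect n (fun x => |f x - SB.noise n ρ f x|)
        + expect n (fun x => |SB.noise n ρ f x - p x|) := by
    rw [← SB.expect_add]
    exact SB.expect_mono fun x => abs_sub_le (f x) (SB.noise n ρ f x) (p x)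
  -- first term
  have hEf : expect n (fun x => f x) ≤ Real.sqrt (expect n (fun x => f x ^ 2)) := by
    have := SB.expect_abs_le_sqrt (n := n) f
    have heq : expect n (fun x => |f x|) = expect n (fun x => f x) :=
      SB.expect_congr fun x => abs_of_nonneg (hf0 x)
    linarith
  have hfirst : expect n (fun x => |f x - SB.noise n ρ f x|)
      ≤ (ε / 2) * Real.sqrt (expect n (fun x => f x ^ 2)) := by
    have h1 := SB.l1_noise a ρ hρ0 hρ1 f hf0 hf
    have h2 : (1 - ρ) * a = ε / 2 := by
      rw [hρ]
      field_simp
      ring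
    rw [h2] at h1
    have hEf0 : 0 ≤ expect n (fun x => f x) := by
      unfold expect
      exact div_nonneg (Finset.sum_nonneg fun x _ => hf0 x) (by positivity)
    nlinarith [hEf, h1]
  -- second term
  have hsecond : expect n (fun x => |SB.noise n ρ f x - p x|)
      ≤ (ε / 3) * Real.sqrt (expect n (fun x => f x ^ 2)) := by
    have h1 := SB.tail_bound ρ hρ0 hρ1 d f
    have h2 : expect n (fun x => |SB.noise n ρ f x - p x|)
        = expect n (fun x => |SB.noise n ρ f x -
            ∑ S ∈ Finset.univ.filter (fun S : Finset (Fin n) => S.card < d),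
              ρ ^ S.card * fourierHat n f S * parity n S x|) :=
      SB.expect_congr fun x => by rw [hp]
    rw [h2]
    refine le_trans h1 ?_
    exact mul_le_mul_of_nonneg_right hρd hsq
  calc expect n (fun x => |f x - p x|)
      ≤ expect n (fun x => |f x - SB.noise n ρ f x|)
        + expect n (fun x => |SB.noise n ρ f x - p x|) := htri
    _ ≤ (ε / 2) * Real.sqrt (expect n (fun x => f x ^ 2))
        + (ε / 3) * Real.sqrt (expect n (fun x => f x ^ 2)) := add_le_add hfirst hsecond
    _ ≤ ε * Real.sqrt (expect n (fun x => f x ^ 2)) := by nlinarith [hsq, hε0]
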